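/- Let N ≥ 1 and let u : ℝ^N → ℝ be a smooth ℤ^N-periodic function. Define the scalar function φ(x) = g(∇u(x)) · (D²u(x) g(∇u(x))), where g(p) = p/√(1+|p|²). Then |∫_{[0,1]^N} ∇u(x) · ∇φ(x) dx| ≤ ∫_{[0,1]^N} (Δu(x))² dx. -/

import Mathlib

open MeasureTheory
open scoped RealInnerProductSpace

noncomputable section

abbrev Euc (N : ℕ) := EuclideanSpace ℝ (Fin N)

/-- Hessian matrix `(D²u(x))_{ij} = ∂_i ∂_j u(x)`. -/
def hessian {N : ℕ} (u : Euc N → ℝ) (x : Euc N) : Matrix (Fin N) (Fin N) ℝ :=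
  Matrix.of fun i j =>
    fderiv ℝ (fun y => fderiv ℝ u y (EuclideanSpace.single j 1)) x (EuclideanSpace.single i 1)

/-- `g(p) = p / √(1+|p|²)`. -/
def gmap {N : ℕ} (p : Euc N) : Euc N := (Real.sqrt (1 + ‖p‖ ^ 2))⁻¹ • p

/-- The integer translation vector associated to `k : Fin N → ℤ`. -/
def intVec {N : ℕ} (k : Fin N → ℤ) : Euc N :=
  (WithLp.equiv 2 (Fin N → ℝ)).symm fun i => (k i : ℝ)

/-- The unit cube `[0,1]^N`. -/
def unitCube (N : ℕ) : Set (Euc N) := {x | ∀ i, x i ∈ Set.Icc (0 : ℝ) 1}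

-- auxiliary lemmas
variable {N : ℕ}

def Pd (i : Fin N) (f : Euc N → ℝ) (x : Euc N) : ℝ :=
  fderiv ℝ f x (EuclideanSpace.single i 1)

def Per (f : Euc N → ℝ) : Prop := ∀ (x : Euc N) (k : Fin N → ℤ), f (x + intVec k) = f x

lemma contDiff_pd {i : Fin N} {f : Euc N → ℝ} (hf : ContDiff ℝ (⊤:ℕ∞) f) :
    ContDiff ℝ (⊤:ℕ∞) (Pd i f) := by
  have h1 : ContDiff ℝ (⊤:ℕ∞) (fderiv ℝ f) := hf.fderiv_right (le_refl _)
  exact (ContinuousLinearMap.apply ℝ ℝ (EuclideanSpace.single i 1)).contDiff.comp h1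

lemma fderiv_shift (f : Euc N → ℝ) (hf : Differentiable ℝ f) (c x : Euc N) :
    fderiv ℝ (fun y => f (y + c)) x = fderiv ℝ f (x + c) := by
  have h : HasFDerivAt (fun y => f (y + c)) (fderiv ℝ f (x + c)) x := by
    have := (hf (x + c)).hasFDerivAt.comp x ((hasFDerivAt_id x).add_const c)
    exact this
  exact h.fderiv

lemma per_pd {i : Fin N} {f : Euc N → ℝ} (hf : ContDiff ℝ (⊤:ℕ∞) f) (hp : Per f) :
    Per (Pd i f) := by
  intro x k
  have hd : Differentiable ℝ f := hf.differentiable (by norm_num)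
  have : f = fun y => f (y + intVec k) := by funext y; rw [hp]
  unfold Pd
  conv_rhs => rw [this, fderiv_shift f hd (intVec k) x]

lemma per_single_shift {h : Euc N → ℝ} (hp : Per h) (i : Fin N) (z : Euc N) :
    h (z + EuclideanSpace.single i 1) = h z := by
  have : EuclideanSpace.single i (1:ℝ) = intVec (Pi.single i 1) := by
    unfold intVec
    apply PiLp.ext
    intro j
    simp [EuclideanSpace.single_apply, Pi.single_apply, WithLp.equiv_symm_apply,
      apply_ite (fun r : ℤ => (r : ℝ))]
  rw [this, hp]

lemma integral_pd_eq_zero {n : ℕ} {i : Fin (n+1)} {h : Euc (n+1) → ℝ}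
    (hh : ContDiff ℝ (⊤:ℕ∞) h) (hp : Per h) :
    ∫ x in unitCube (n+1), Pd i h x = 0 := by
  classical
  set L : Euc (n+1) ≃L[ℝ] (Fin (n+1) → ℝ) := EuclideanSpace.equiv (Fin (n+1)) ℝ with hL
  have hLsymm : ∀ y : Fin (n+1) → ℝ, ∀ j, (L.symm y) j = y j := fun y j => rfl
  -- change of variables
  have e := (MeasurableEquiv.toLp 2 (Fin (n+1) → ℝ)).symm
  have hpres : MeasurePreserving (⇑(MeasurableEquiv.toLp 2 (Fin (n+1) → ℝ)).symm.symm)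
      (volume : Measure (Fin (n+1) → ℝ)) (volume : Measure (Euc (n+1))) :=
    (EuclideanSpace.volume_preserving_symm_measurableEquiv_toLp (Fin (n+1))).symm
  have hemb : MeasurableEmbedding (⇑(MeasurableEquiv.toLp 2 (Fin (n+1) → ℝ)).symm.symm) :=
    (MeasurableEquiv.toLp 2 (Fin (n+1) → ℝ)).symm.symm.measurableEmbedding
  have hpre : (⇑(MeasurableEquiv.toLp 2 (Fin (n+1) → ℝ)).symm.symm) ⁻¹' (unitCube (n+1)) =
      Set.Icc (0 : Fin (n+1) → ℝ) 1 := by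
    ext y
    simp only [Set.mem_preimage, unitCube, Set.mem_setOf_eq, Set.mem_Icc]
    rw [Pi.le_def, Pi.le_def]
    constructor
    · intro hy
      exact ⟨fun j => (hy j).1, fun j => (hy j).2⟩
    · intro hy j
      exact ⟨hy.1 j, hy.2 j⟩
  have hd : Differentiable ℝ h := hh.differentiable (by norm_num)
  have hsingle : L.symm (Pi.single i 1) = EuclideanSpace.single i (1:ℝ) := by
    apply PiLp.ext
    intro j
    simp [EuclideanSpace.single_apply, Pi.single_apply, hLsymm]
  have hcv : ∫ x in unitCube (n+1), Pd i h x
      = ∫ y in Set.Icc (0:Fin (n+1)→ℝ) 1, Pd i h (L.symm y) := by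
    rw [← hpres.setIntegral_preimage_emb hemb (fun x => Pd i h x) (unitCube (n+1)), hpre]
    rfl
  rw [hcv]
  -- divergence theorem
  set f : Fin (n+1) → (Fin (n+1) → ℝ) → ℝ := fun j x => if j = i then h (L.symm x) else 0 with hf
  set f' : Fin (n+1) → (Fin (n+1) → ℝ) → (Fin (n+1) → ℝ) →L[ℝ] ℝ :=
    fun j x => if j = i then (fderiv ℝ h (L.symm x)).comp
      (L.symm : (Fin (n+1) → ℝ) →L[ℝ] Euc (n+1)) else 0 with hf'
  have hsum : ∀ x, (∑ j, f' j x (Pi.single j 1)) = Pd i h (L.symm x) := by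
    intro x
    rw [Finset.sum_eq_single i]
    · simp [hf', Pd, hsingle]
    · intro j _ hj; simp [hf', hj]
    · simp
  have hcont : Continuous fun x : Fin (n+1) → ℝ => Pd i h (L.symm x) :=
    (contDiff_pd hh).continuous.comp L.symm.continuous
  have key := MeasureTheory.integral_divergence_of_hasFDerivAt_off_countable'
    (a := (0 : Fin (n+1) → ℝ)) (b := 1) (by intro j; norm_num) f f' ∅ Set.countable_empty
    (fun j => by
      by_cases hj : j = i
      · subst hj; simp only [hf, if_pos rfl]
        exact (hh.continuous.comp L.symm.continuous).continuousOn
      · simp only [hf, if_neg hj]; exact continuousOn_const)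
    (fun x _ j => by
      by_cases hj : j = i
      · subst hj; simp only [hf, hf', if_pos rfl]
        exact ((hd (L.symm x)).hasFDerivAt).comp x (L.symm.hasFDerivAt)
      · simp only [hf, hf', if_neg hj]; exact hasFDerivAt_const 0 x)
    (by
      rw [show (fun x => ∑ j, f' j x (Pi.single j 1)) = fun x => Pd i h (L.symm x) from
        funext hsum]
      exact hcont.continuousOn.integrableOn_compact isCompact_Icc)
  rw [show (fun y => Pd i h (L.symm y)) = fun x => ∑ j, f' j x (Pi.single j 1) from
    (funext hsum).symm] at *
  rw [key]
  apply Finset.sum_eq_zero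
  intro j _
  by_cases hj : j = i
  · subst hj
    have hpt : ∀ x : Fin n → ℝ, f j (j.insertNth ((1:Fin (n+1)→ℝ) j) x)
        = f j (j.insertNth ((0:Fin (n+1)→ℝ) j) x) := by
      intro x
      simp only [hf, if_pos rfl, Pi.one_apply, Pi.zero_apply]
      have harg : L.symm (j.insertNth (1:ℝ) x)
          = L.symm (j.insertNth (0:ℝ) x) + EuclideanSpace.single j 1 := by
        apply PiLp.ext
        intro m
        simp only [PiLp.add_apply, hLsymm, EuclideanSpace.single_apply]
        rcases eq_or_ne m j with rfl | hm
        · simp [Fin.insertNth_apply_same]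
        · obtain ⟨l, rfl⟩ := Fin.exists_succAbove_eq hm
          simp [Fin.insertNth_apply_succAbove, Fin.succAbove_ne]
      rw [harg, per_single_shift hp]
    rw [show (fun x : Fin n → ℝ => f j (j.insertNth ((1:Fin (n+1)→ℝ) j) x))
        = (fun x => f j (j.insertNth ((0:Fin (n+1)→ℝ) j) x)) from funext hpt]
    exact sub_self _
  · simp [hf, hj]

lemma isCompact_unitCube : IsCompact (unitCube N) := by
  have h : unitCube N = (EuclideanSpace.equiv (Fin N) ℝ).symm '' (Set.Icc 0 1) := by
    ext x
    rw [(EuclideanSpace.equiv (Fin N) ℝ).image_symm_eq_preimage]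
    simp only [Set.mem_preimage, Set.mem_Icc, unitCube, Set.mem_setOf_eq, Pi.le_def]
    constructor
    · intro hx; exact ⟨fun i => (hx i).1, fun i => (hx i).2⟩
    · intro hx i; exact ⟨hx.1 i, hx.2 i⟩
  rw [h]
  exact isCompact_Icc.image (EuclideanSpace.equiv (Fin N) ℝ).symm.continuous

lemma integrableOn_cube {w : Euc N → ℝ} (hw : Continuous w) :
    IntegrableOn w (unitCube N) := hw.continuousOn.integrableOn_compact isCompact_unitCube

lemma per_mul {f g : Euc N → ℝ} (pf : Per f) (pg : Per g) : Per (fun x => f x * g x) := by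
  intro x k; simp [pf x k, pg x k]

lemma pd_mul {f g : Euc N → ℝ} (hf : ContDiff ℝ (⊤:ℕ∞) f) (hg : ContDiff ℝ (⊤:ℕ∞) g)
    (i : Fin N) (x : Euc N) :
    Pd i (fun y => f y * g y) x = Pd i f x * g x + f x * Pd i g x := by
  unfold Pd
  rw [fderiv_fun_mul ((hf.differentiable (by norm_num)) x) ((hg.differentiable (by norm_num)) x)]
  simp
  ring

lemma integral_ibp {n : ℕ} {i : Fin (n+1)} {f g : Euc (n+1) → ℝ}
    (hf : ContDiff ℝ (⊤:ℕ∞) f) (hg : ContDiff ℝ (⊤:ℕ∞) g) (pf : Per f) (pg : Per g) :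
    ∫ x in unitCube (n+1), Pd i f x * g x = - ∫ x in unitCube (n+1), f x * Pd i g x := by
  have h0 : ∫ x in unitCube (n+1), Pd i (fun y => f y * g y) x = 0 :=
    integral_pd_eq_zero (hf.mul hg) (per_mul pf pg)
  have hpt : ∀ x, Pd i (fun y => f y * g y) x = Pd i f x * g x + f x * Pd i g x :=
    pd_mul hf hg i
  rw [setIntegral_congr_fun (isCompact_unitCube.measurableSet) (fun x _ => hpt x)] at h0
  rw [integral_add (integrableOn_cube ((contDiff_pd hf).continuous.fun_mul hg.continuous))
    (integrableOn_cube (hf.continuous.fun_mul (contDiff_pd hg).continuous))] at h0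
  linarith

lemma pd_comm {f : Euc N → ℝ} (hf : ContDiff ℝ (⊤:ℕ∞) f) (i j : Fin N) (x : Euc N) :
    Pd i (Pd j f) x = Pd j (Pd i f) x := by
  have hsym : IsSymmSndFDerivAt ℝ f x :=
    (hf.contDiffAt).isSymmSndFDerivAt (by
      rw [show ((2:WithTop ℕ∞)) = ((2:ℕ∞) : WithTop ℕ∞) by rfl]
      rw [minSmoothness_of_isRCLikeNormedField]
      exact_mod_cast le_top)
  have hdf : ContDiff ℝ (⊤:ℕ∞) (fderiv ℝ f) := hf.fderiv_right (le_refl _)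
  have key : ∀ (a b : Fin N),
      fderiv ℝ (fun y => fderiv ℝ f y (EuclideanSpace.single b 1)) x (EuclideanSpace.single a 1)
      = fderiv ℝ (fderiv ℝ f) x (EuclideanSpace.single a 1) (EuclideanSpace.single b 1) := by
    intro a b
    rw [fderiv_clm_apply ((hdf.differentiable (by norm_num)) x)
      (differentiableAt_const (EuclideanSpace.single b 1))]
    simp
  unfold Pd
  rw [key i j, key j i]
  exact hsym _ _

section EqE
variable {n : ℕ} {u : Euc (n+1) → ℝ} (hu : ContDiff ℝ (⊤:ℕ∞) u) (hp : Per u)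
include hu hp

lemma integral_mixed (i j : Fin (n+1)) :
    ∫ x in unitCube (n+1), Pd i (Pd j u) x * Pd i (Pd j u) x
      = ∫ x in unitCube (n+1), Pd i (Pd i u) x * Pd j (Pd j u) x := by
  have hju : ContDiff ℝ (⊤:ℕ∞) (Pd j u) := contDiff_pd hu
  have hiu : ContDiff ℝ (⊤:ℕ∞) (Pd i u) := contDiff_pd hu
  have pju : Per (Pd j u) := per_pd hu hp
  have e1 := integral_ibp (i := i) (f := Pd j u) (g := Pd i (Pd j u)) hju
    (contDiff_pd hju) pju (per_pd hju pju)
  have hcomm : (fun x => Pd i (Pd i (Pd j u)) x) = fun x => Pd j (Pd i (Pd i u)) x := by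
    funext x
    have h1 : Pd i (Pd j u) = Pd j (Pd i u) := funext (pd_comm hu i j)
    rw [show Pd i (Pd i (Pd j u)) x = Pd i (Pd j (Pd i u)) x by rw [h1]]
    exact pd_comm hiu i j x
  have e2 := integral_ibp (i := j) (f := Pd j u) (g := Pd i (Pd i u)) hju
    (contDiff_pd hiu) pju (per_pd hiu (per_pd hu hp))
  calc ∫ x in unitCube (n+1), Pd i (Pd j u) x * Pd i (Pd j u) x
      = - ∫ x in unitCube (n+1), Pd j u x * Pd i (Pd i (Pd j u)) x := e1
    _ = - ∫ x in unitCube (n+1), Pd j u x * Pd j (Pd i (Pd i u)) x := by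
        congr 1
        exact setIntegral_congr_fun isCompact_unitCube.measurableSet
          (fun x _ => by rw [show Pd i (Pd i (Pd j u)) x = Pd j (Pd i (Pd i u)) x from
            congrFun hcomm x])
    _ = ∫ x in unitCube (n+1), Pd j (Pd j u) x * Pd i (Pd i u) x := by rw [e2]
    _ = ∫ x in unitCube (n+1), Pd i (Pd i u) x * Pd j (Pd j u) x := by
        exact setIntegral_congr_fun isCompact_unitCube.measurableSet
          (fun x _ => mul_comm _ _)

lemma integral_hess_sq :
    ∫ x in unitCube (n+1), ∑ i, ∑ j, Pd i (Pd j u) x ^ 2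
      = ∫ x in unitCube (n+1), (∑ i, Pd i (Pd i u) x) ^ 2 := by
  have hint : ∀ (w : Euc (n+1) → ℝ) (v : Euc (n+1) → ℝ),
      (ContDiff ℝ (⊤:ℕ∞) w) → (ContDiff ℝ (⊤:ℕ∞) v) →
      IntegrableOn (fun x => w x * v x) (unitCube (n+1)) := fun w v hw hv =>
    integrableOn_cube (hw.continuous.mul hv.continuous)
  have hsm : ∀ i j : Fin (n+1), ContDiff ℝ (⊤:ℕ∞) (Pd i (Pd j u)) :=
    fun i j => contDiff_pd (contDiff_pd hu)
  calc ∫ x in unitCube (n+1), ∑ i, ∑ j, Pd i (Pd j u) x ^ 2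
      = ∑ i, ∑ j, ∫ x in unitCube (n+1), Pd i (Pd j u) x * Pd i (Pd j u) x := by
        rw [integral_finset_sum _ (fun i _ => integrableOn_cube (by
          exact continuous_finset_sum _ (fun j _ => ((hsm i j).continuous.pow 2))))]
        congr 1; funext i
        rw [integral_finset_sum _ (fun j _ => integrableOn_cube ((hsm i j).continuous.fun_pow 2))]
        congr 1; funext j
        exact setIntegral_congr_fun isCompact_unitCube.measurableSet (fun x _ => sq _)
    _ = ∑ i, ∑ j, ∫ x in unitCube (n+1), Pd i (Pd i u) x * Pd j (Pd j u) x := by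
        congr 1; funext i; congr 1; funext j; exact integral_mixed hu hp i j
    _ = ∫ x in unitCube (n+1), ∑ i, ∑ j, Pd i (Pd i u) x * Pd j (Pd j u) x := by
        rw [integral_finset_sum _ (fun i _ => integrableOn_cube (by
          exact continuous_finset_sum _ (fun j _ =>
            ((hsm i i).continuous.mul (hsm j j).continuous))))]
        congr 1; funext i
        rw [integral_finset_sum _ (fun j _ =>
          integrableOn_cube ((hsm i i).continuous.fun_mul (hsm j j).continuous))]
    _ = ∫ x in unitCube (n+1), (∑ i, Pd i (Pd i u) x) ^ 2 := by
        exact setIntegral_congr_fun isCompact_unitCube.measurableSet (fun x _ => by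
          rw [sq, Finset.sum_mul_sum])

end EqE

lemma gradient_coord (f : Euc N → ℝ) (x : Euc N) (i : Fin N) :
    (gradient f x) i = Pd i f x := by
  have h1 : ⟪gradient f x, EuclideanSpace.single i (1:ℝ)⟫ = fderiv ℝ f x
      (EuclideanSpace.single i 1) := by
    unfold gradient
    exact InnerProductSpace.toDual_symm_apply
  rw [Pd, ← h1]
  rw [EuclideanSpace.inner_single_right]; simp

lemma norm_sq_eq (p : Euc N) : ‖p‖ ^ 2 = ∑ i, p i ^ 2 := by
  rw [EuclideanSpace.norm_eq, Real.sq_sqrt (by positivity)]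
  simp [Real.norm_eq_abs, sq_abs]

lemma gmap_apply (p : Euc N) (i : Fin N) :
    gmap p i = (Real.sqrt (1 + ‖p‖ ^ 2))⁻¹ * p i := rfl

lemma gmap_sq_sum_le (p : Euc N) : ∑ i, gmap p i ^ 2 ≤ 1 := by
  have h0 : (0:ℝ) ≤ 1 + ‖p‖ ^ 2 := by positivity
  have : ∑ i, gmap p i ^ 2 = (1 + ‖p‖ ^ 2)⁻¹ * ‖p‖ ^ 2 := by
    simp only [gmap_apply, mul_pow, ← Finset.mul_sum, ← norm_sq_eq]
    congr 1
    rw [← Real.sqrt_inv, Real.sq_sqrt (by positivity)]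
  rw [this]
  rw [inv_mul_le_iff₀ (by positivity)]
  linarith

lemma quad_bound (c : Fin N → ℝ) (A : Fin N → Fin N → ℝ) (hc : ∑ i, c i ^ 2 ≤ 1) :
    (∑ i, ∑ j, c i * A i j * c j) ^ 2 ≤ ∑ i, ∑ j, A i j ^ 2 := by
  have hc0 : (0:ℝ) ≤ ∑ i, c i ^ 2 := Finset.sum_nonneg fun i _ => sq_nonneg _
  have hrw : (∑ i, ∑ j, c i * A i j * c j) = ∑ j, (∑ i, c i * A i j) * c j := by
    rw [Finset.sum_comm]
    congr 1; funext j
    rw [Finset.sum_mul]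
  rw [hrw]
  calc (∑ j, (∑ i, c i * A i j) * c j) ^ 2
      ≤ (∑ j, (∑ i, c i * A i j) ^ 2) * ∑ j, c j ^ 2 :=
        Finset.sum_mul_sq_le_sq_mul_sq _ _ _
    _ ≤ (∑ j, (∑ i, c i * A i j) ^ 2) * 1 := by
        apply mul_le_mul_of_nonneg_left hc
        exact Finset.sum_nonneg fun j _ => sq_nonneg _
    _ = ∑ j, (∑ i, c i * A i j) ^ 2 := mul_one _
    _ ≤ ∑ j, (∑ i, c i ^ 2) * (∑ i, A i j ^ 2) := by
        apply Finset.sum_le_sum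
        intro j _
        exact Finset.sum_mul_sq_le_sq_mul_sq _ _ _
    _ ≤ ∑ j, ∑ i, A i j ^ 2 := by
        apply Finset.sum_le_sum
        intro j _
        have h1 : (0:ℝ) ≤ ∑ i, A i j ^ 2 := Finset.sum_nonneg fun i _ => sq_nonneg _
        nlinarith
    _ = ∑ i, ∑ j, A i j ^ 2 := Finset.sum_comm

section Phi
variable {u : Euc N → ℝ} (hu : ContDiff ℝ (⊤:ℕ∞) u) (hp : Per u)

lemma hessian_apply (y : Euc N) (i j : Fin N) : hessian u y i j = Pd i (Pd j u) y := rfl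

lemma gmap_grad_eq (y : Euc N) (i : Fin N) :
    gmap (gradient u y) i
      = (Real.sqrt (1 + ∑ m, Pd m u y ^ 2))⁻¹ * Pd i u y := by
  rw [gmap_apply, norm_sq_eq, gradient_coord]
  have hm : ∀ m : Fin N, gradient u y m = Pd m u y := fun m => gradient_coord u y m
  simp only [hm]

include hu in
lemma contDiff_r : ContDiff ℝ (⊤:ℕ∞)
    (fun y : Euc N => (Real.sqrt (1 + ∑ m, Pd m u y ^ 2))⁻¹) := by
  have hq : ContDiff ℝ (⊤:ℕ∞) (fun y : Euc N => 1 + ∑ m, Pd m u y ^ 2) := by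
    apply ContDiff.add contDiff_const
    apply ContDiff.sum
    intro m _
    exact (contDiff_pd hu).pow 2
  have hqpos : ∀ y : Euc N, (0:ℝ) < 1 + ∑ m, Pd m u y ^ 2 := by
    intro y
    have : (0:ℝ) ≤ ∑ m, Pd m u y ^ 2 := Finset.sum_nonneg fun m _ => sq_nonneg _
    linarith
  have hs : ContDiff ℝ (⊤:ℕ∞) (fun y : Euc N => Real.sqrt (1 + ∑ m, Pd m u y ^ 2)) := by
    rw [contDiff_iff_contDiffAt]
    intro y
    exact (Real.contDiffAt_sqrt (hqpos y).ne').comp y hq.contDiffAt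
  exact hs.inv fun y => (Real.sqrt_pos.2 (hqpos y)).ne'

def phiF (u : Euc N → ℝ) : Euc N → ℝ :=
  fun y => ∑ i, ∑ j, gmap (gradient u y) i * hessian u y i j * gmap (gradient u y) j

lemma phi_eq : phiF u = fun y => ∑ i, ∑ j,
    ((Real.sqrt (1 + ∑ m, Pd m u y ^ 2))⁻¹ * Pd i u y) * Pd i (Pd j u) y
      * ((Real.sqrt (1 + ∑ m, Pd m u y ^ 2))⁻¹ * Pd j u y) := by
  funext y
  unfold phiF
  congr 1; funext i; congr 1; funext j
  rw [gmap_grad_eq, gmap_grad_eq, hessian_apply]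

include hu in
lemma contDiff_phi : ContDiff ℝ (⊤:ℕ∞) (phiF u) := by
  rw [phi_eq]
  apply ContDiff.sum; intro i _
  apply ContDiff.sum; intro j _
  exact (((contDiff_r hu).mul (contDiff_pd hu)).mul (contDiff_pd (contDiff_pd hu))).mul
    ((contDiff_r hu).mul (contDiff_pd hu))

include hu hp in
lemma per_phi : Per (phiF u) := by
  intro x k
  rw [phi_eq]
  simp only
  congr 1; funext i; congr 1; funext j
  rw [per_pd hu hp, per_pd (contDiff_pd hu) (per_pd hu hp), per_pd hu hp]
  have : ∀ m : Fin N, Pd m u (x + intVec k) = Pd m u x := fun m => per_pd hu hp x k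
  simp only [this]

lemma phi_sq_le (y : Euc N) : phiF u y ^ 2 ≤ ∑ i, ∑ j, Pd i (Pd j u) y ^ 2 := by
  have := quad_bound (fun i => gmap (gradient u y) i) (fun i j => Pd i (Pd j u) y)
    (gmap_sq_sum_le (gradient u y))
  unfold phiF
  simpa [hessian_apply] using this

end Phi


/-- For smooth `ℤ^N`-periodic `u` and
`φ = g(∇u)·(D²u g(∇u))` with `g(p) = p/√(1+|p|²)`, one has
`|∫_{[0,1]^N} ∇u·∇φ| ≤ ∫_{[0,1]^N} (Δu)²`. -/
theorem stmt_15 (N : ℕ) (hN : 1 ≤ N) (u : Euc N → ℝ) (hu : ContDiff ℝ (⊤ : ℕ∞) u)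
    (hper : ∀ (x : Euc N) (k : Fin N → ℤ), u (x + intVec k) = u x) :
    |∫ x in unitCube N,
        ⟪gradient u x,
          gradient (fun y => ∑ i, ∑ j,
            gmap (gradient u y) i * hessian u y i j * gmap (gradient u y) j) x⟫| ≤
      ∫ x in unitCube N, (∑ i, hessian u x i i) ^ 2 := by
  obtain ⟨n, rfl⟩ : ∃ n, N = n + 1 := ⟨N - 1, (Nat.succ_pred_eq_of_pos hN).symm⟩
  have hper' : Per u := hper
  have hrfl : (fun y : Euc (n+1) => ∑ i, ∑ j,
      gmap (gradient u y) i * hessian u y i j * gmap (gradient u y) j) = phiF u := rfl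
  rw [hrfl]
  have meas : MeasurableSet (unitCube (n+1)) := isCompact_unitCube.measurableSet
  have hφsm : ContDiff ℝ (⊤:ℕ∞) (phiF u) := contDiff_phi hu
  have hφper : Per (phiF u) := per_phi hu hper'
  set Δ : Euc (n+1) → ℝ := fun x => ∑ i, Pd i (Pd i u) x with hΔ
  have hΔsm : ContDiff ℝ (⊤:ℕ∞) Δ :=
    ContDiff.sum fun i _ => contDiff_pd (contDiff_pd hu)
  set S : Euc (n+1) → ℝ := fun x => ∑ i, ∑ j, Pd i (Pd j u) x ^ 2 with hS
  have hSsm : ContDiff ℝ (⊤:ℕ∞) S := by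
    apply ContDiff.sum; intro i _; apply ContDiff.sum; intro j _
    exact (contDiff_pd (contDiff_pd hu)).pow 2
  -- RHS rewrite
  have hrhs : ∫ x in unitCube (n+1), (∑ i, hessian u x i i) ^ 2
      = ∫ x in unitCube (n+1), Δ x ^ 2 := rfl
  rw [hrhs]
  -- step 1: integration by parts
  have step1 : ∫ x in unitCube (n+1), ⟪gradient u x, gradient (phiF u) x⟫
      = - ∫ x in unitCube (n+1), phiF u x * Δ x := by
    have h1 : ∀ x, ⟪gradient u x, gradient (phiF u) x⟫
        = ∑ i, Pd i (phiF u) x * Pd i u x := by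
      intro x
      rw [PiLp.inner_apply]
      congr 1; funext i
      rw [gradient_coord, gradient_coord]
      simp [mul_comm]
    rw [setIntegral_congr_fun meas (fun x _ => h1 x)]
    rw [integral_finset_sum _ (fun i _ => integrableOn_cube
      ((contDiff_pd hφsm).continuous.fun_mul (contDiff_pd hu).continuous))]
    have h2 : ∀ i : Fin (n+1), ∫ x in unitCube (n+1), Pd i (phiF u) x * Pd i u x
        = - ∫ x in unitCube (n+1), phiF u x * Pd i (Pd i u) x := fun i =>
      integral_ibp hφsm (contDiff_pd hu) hφper (per_pd hu hper')
    rw [Finset.sum_congr rfl (fun i _ => h2 i), Finset.sum_neg_distrib]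
    congr 1
    rw [← integral_finset_sum _ (fun i _ => integrableOn_cube
      (hφsm.continuous.fun_mul (contDiff_pd (contDiff_pd hu)).continuous))]
    exact setIntegral_congr_fun meas (fun x _ => (Finset.mul_sum _ _ _).symm)
  rw [step1, abs_neg]
  -- step 2: bound
  have hptw : ∀ x, |phiF u x * Δ x| ≤ (S x + Δ x ^ 2) / 2 := by
    intro x
    have hb := phi_sq_le (u := u) x
    rw [abs_mul]
    nlinarith [sq_nonneg (|phiF u x| - |Δ x|), sq_abs (phiF u x), sq_abs (Δ x),
      abs_nonneg (phiF u x), abs_nonneg (Δ x)]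
  have habs : |∫ x in unitCube (n+1), phiF u x * Δ x|
      ≤ ∫ x in unitCube (n+1), |phiF u x * Δ x| := by
    simpa [Real.norm_eq_abs, abs_mul] using norm_integral_le_integral_norm
      (μ := volume.restrict (unitCube (n+1))) (fun x => phiF u x * Δ x)
  have hmono : ∫ x in unitCube (n+1), |phiF u x * Δ x|
      ≤ ∫ x in unitCube (n+1), (S x + Δ x ^ 2) / 2 := by
    apply setIntegral_mono_on
    · exact integrableOn_cube (hφsm.continuous.mul hΔsm.continuous).abs
    · exact integrableOn_cube (((hSsm.continuous.add (hΔsm.continuous.pow 2)).div_const 2))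
    · exact meas
    · exact fun x _ => hptw x
  have hsplit : ∫ x in unitCube (n+1), (S x + Δ x ^ 2) / 2
      = ((∫ x in unitCube (n+1), S x) + ∫ x in unitCube (n+1), Δ x ^ 2) / 2 := by
    rw [← integral_add (integrableOn_cube hSsm.continuous)
      (integrableOn_cube (hΔsm.continuous.fun_pow 2))]
    exact integral_div _ _
  have hE : ∫ x in unitCube (n+1), S x = ∫ x in unitCube (n+1), Δ x ^ 2 :=
    integral_hess_sq hu hper'
  calc |∫ x in unitCube (n+1), phiF u x * Δ x|
      ≤ ∫ x in unitCube (n+1), (S x + Δ x ^ 2) / 2 := habs.trans hmono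
    _ = ((∫ x in unitCube (n+1), S x) + ∫ x in unitCube (n+1), Δ x ^ 2) / 2 := hsplit
    _ = ∫ x in unitCube (n+1), Δ x ^ 2 := by rw [hE]; ring
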